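/- arXiv:1807.04261 — 2 statements merged into one kernel-verified Lean document; each statement's English description precedes it below -/
import Mathlib

section
/- Fix 0 < ε < d⁻⁴·(1/(16π))² and let d ≥ 2. Suppose W_i ∈ ℝ^{n_i×n_{i−1}} satisfies the Weight Distribution Condition with constant ε for i = 1,…,d. Then for all nonzero x, y ∈ ℝ^k: ⟨(Π_{i=d}^1 W_{i,+,x})·x, (Π_{i=d}^1 W_{i,+,y})·y⟩ ≥ (1/(4π))·(1/2^d)·‖x‖·‖y‖. -/
open Real Filter Set MeasureTheory ProbabilityTheory Matrix
open scoped Classical BigOperators NNReal ENNReal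

noncomputable section

namespace DPR

/-- Euclidean dot product on `Fin n → ℝ`. -/
def dotp {n : ℕ} (u v : Fin n → ℝ) : ℝ := ∑ i, u i * v i

/-- Euclidean norm on `Fin n → ℝ`. -/
def nrm {n : ℕ} (v : Fin n → ℝ) : ℝ := Real.sqrt (dotp v v)

/-- Angle between two vectors. -/
def angl {n : ℕ} (u v : Fin n → ℝ) : ℝ := Real.arccos (dotp u v / (nrm u * nrm v))

/-- Spectral norm of a matrix: the operator norm of the induced map between
Euclidean spaces. -/
def specNorm {a b : ℕ} (M : Matrix (Fin a) (Fin b) ℝ) : ℝ :=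
  ‖LinearMap.toContinuousLinearMap (Matrix.toEuclideanLin M)‖

/-- The symmetric matrix `M_{x̂↔ŷ}` sending `x̂ ↦ ŷ`, `ŷ ↦ x̂` and vanishing on
`span{x,y}ᗮ`. -/
def swapMat {n : ℕ} (x y : Fin n → ℝ) : Matrix (Fin n) (Fin n) ℝ :=
  let u := (nrm x)⁻¹ • x
  let v := (nrm y)⁻¹ • y
  let c := dotp u v
  let w := v - c • u
  if dotp w w = 0 then c • Matrix.vecMulVec u u
  else
    c • Matrix.vecMulVec u u + Matrix.vecMulVec u w + Matrix.vecMulVec w u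
      - (c / dotp w w) • Matrix.vecMulVec w w

/-- `Q_{x,y} = ((π − θ)/(2π))·I + (sin θ/(2π))·M_{x̂↔ŷ}`. -/
def Qmat {k : ℕ} (x y : Fin k → ℝ) : Matrix (Fin k) (Fin k) ℝ :=
  ((π - angl x y) / (2 * π)) • (1 : Matrix (Fin k) (Fin k) ℝ)
    + (Real.sin (angl x y) / (2 * π)) • swapMat x y

/-- `Φ_{z,w} = ((π − 2θ)/π)·I + (2 sin θ/π)·M_{ẑ↔ŵ}`. -/
def Phi {n : ℕ} (z w : Fin n → ℝ) : Matrix (Fin n) (Fin n) ℝ :=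
  ((π - 2 * angl z w) / π) • (1 : Matrix (Fin n) (Fin n) ℝ)
    + (2 * Real.sin (angl z w) / π) • swapMat z w

/-- `W_{+,v} = diag(1_{Wv>0})·W`. -/
def posPart {a b : ℕ} (W : Matrix (Fin a) (Fin b) ℝ) (v : Fin b → ℝ) :
    Matrix (Fin a) (Fin b) ℝ :=
  Matrix.of fun i j => if 0 < W.mulVec v i then W i j else 0

/-- Weight Distribution Condition with constant `ε`. -/
def WDC {a k : ℕ} (W : Matrix (Fin a) (Fin k) ℝ) (ε : ℝ) : Prop :=
  ∀ x y : Fin k → ℝ, x ≠ 0 → y ≠ 0 →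
    specNorm ((posPart W x)ᵀ * posPart W y - Qmat x y) ≤ ε

/-- `A_z = diag(sgn(Az))·A`. -/
def signedMat {a b : ℕ} (A : Matrix (Fin a) (Fin b) ℝ) (z : Fin b → ℝ) :
    Matrix (Fin a) (Fin b) ℝ :=
  Matrix.of fun i j => Real.sign (A.mulVec z i) * A i j

/-- Entrywise ReLU. -/
def reluV {a : ℕ} (v : Fin a → ℝ) : Fin a → ℝ := fun i => max (v i) 0

/-- Entrywise absolute value. -/
def absV {a : ℕ} (v : Fin a → ℝ) : Fin a → ℝ := fun i => |v i|

/-- The `d`-layer ReLU network `G(x) = relu(W_d ⋯ relu(W_1 x) ⋯)`. -/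
def net (n : ℕ → ℕ) (W : ∀ i : ℕ, Matrix (Fin (n (i + 1))) (Fin (n i)) ℝ) :
    (d : ℕ) → (Fin (n 0) → ℝ) → Fin (n d) → ℝ
  | 0, x => x
  | d + 1, x => reluV ((W d).mulVec (net n W d x))

/-- The product `Π_{i=d}^1 W_{i,+,x}`. -/
def layerProd (n : ℕ → ℕ) (W : ∀ i : ℕ, Matrix (Fin (n (i + 1))) (Fin (n i)) ℝ) :
    (d : ℕ) → (Fin (n 0) → ℝ) → Matrix (Fin (n d)) (Fin (n 0)) ℝ
  | 0, _ => 1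
  | d + 1, x => posPart (W d) ((layerProd n W d x).mulVec x) * layerProd n W d x

/-- The matrix `W_{i+1,+,x}` (the `(i+1)`-st layer, zero-indexed as `i`). -/
def layerPos (n : ℕ → ℕ) (W : ∀ i : ℕ, Matrix (Fin (n (i + 1))) (Fin (n i)) ℝ)
    (i : ℕ) (x : Fin (n 0) → ℝ) : Matrix (Fin (n (i + 1))) (Fin (n i)) ℝ :=
  posPart (W i) ((layerProd n W i x).mulVec x)

/-- `g(θ) = arccos((cos θ·(π − θ) + sin θ)/π)`. -/
def gfun (θ : ℝ) : ℝ := Real.arccos ((Real.cos θ * (π - θ) + Real.sin θ) / π)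

/-- The sequence `θ_0 = θ₀`, `θ_{i+1} = g(θ_i)`. -/
def thetaSeq (θ₀ : ℝ) : ℕ → ℝ
  | 0 => θ₀
  | i + 1 => gfun (thetaSeq θ₀ i)

/-- `ρ_d`. -/
def rho (d : ℕ) : ℝ :=
  -(2 * Real.sin (thetaSeq π d)) / π +
    ((π - 2 * thetaSeq π d) / π) *
      ∑ i ∈ Finset.range d,
        (Real.sin (thetaSeq π i) / π) * ∏ j ∈ Finset.Ico (i + 1) d, (π - thetaSeq π j) / π

/-- The vector `h_{x,y}`. -/
def hvec (d : ℕ) {k : ℕ} (x y : Fin k → ℝ) : Fin k → ℝ :=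
  (-(nrm y / 2 ^ d) * ((π - 2 * thetaSeq (angl x y) d) / π) *
      ∏ i ∈ Finset.range d, (π - thetaSeq (angl x y) i) / π) • ((nrm y)⁻¹ • y) +
    ((1 / 2 ^ d) *
        (nrm x -
          nrm y *
            (2 * Real.sin (thetaSeq (angl x y) d) / π -
              ((π - 2 * thetaSeq (angl x y) d) / π) *
                ∑ i ∈ Finset.range d,
                  (Real.sin (thetaSeq (angl x y) i) / π) *
                    ∏ j ∈ Finset.Ico (i + 1) d, (π - thetaSeq (angl x y) j) / π))) •
      ((nrm x)⁻¹ • x)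

/-- The vector `h̃_{x,y}`. -/
def htil (d : ℕ) {k : ℕ} (x y : Fin k → ℝ) : Fin k → ℝ :=
  (1 / 2 ^ d) •
    ((∏ i ∈ Finset.range d, (π - thetaSeq (angl x y) i) / π) • y +
      (∑ i ∈ Finset.range d,
          (Real.sin (thetaSeq (angl x y) i) / π) *
            ∏ j ∈ Finset.Ico (i + 1) d, (π - thetaSeq (angl x y) j) / π) •
        ((nrm y / nrm x) • x))

/-- The set `S_{ε,x₀}`. -/
def Sset (d : ℕ) {k : ℕ} (ε : ℝ) (x₀ : Fin k → ℝ) : Set (Fin k → ℝ) :=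
  {x | x ≠ 0 ∧ nrm (hvec d x x₀) ≤ ε / 2 ^ d * max (nrm x) (nrm x₀)}

/-- The vector `v̄_{x,y}`. -/
def vbar (n : ℕ → ℕ) (W : ∀ i : ℕ, Matrix (Fin (n (i + 1))) (Fin (n i)) ℝ) (d : ℕ)
    (x y : Fin (n 0) → ℝ) : Fin (n 0) → ℝ :=
  (layerProd n W d x)ᵀ.mulVec ((layerProd n W d x).mulVec x) -
    (layerProd n W d x)ᵀ.mulVec
      ((Phi ((layerProd n W d x).mulVec x) ((layerProd n W d y).mulVec y)).mulVec
        ((layerProd n W d y).mulVec y))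

/-- The objective `f(x) = (1/2)·‖ |A G(x)| − |A G(x₀)| ‖²`. -/
def objf (n : ℕ → ℕ) (W : ∀ i : ℕ, Matrix (Fin (n (i + 1))) (Fin (n i)) ℝ) (d m : ℕ)
    (A : Matrix (Fin m) (Fin (n d)) ℝ) (x₀ x : Fin (n 0) → ℝ) : ℝ :=
  (1 / 2) * nrm (absV (A.mulVec (net n W d x)) - absV (A.mulVec (net n W d x₀))) ^ 2

/-- One-sided directional derivative `D_v f(x) = L`. -/
def HasDirDeriv {k : ℕ} (f : (Fin k → ℝ) → ℝ) (x v : Fin k → ℝ) (L : ℝ) : Prop :=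
  Filter.Tendsto (fun t : ℝ => (f (x + t • v) - f x) / t) (nhdsWithin 0 (Set.Ioi 0)) (nhds L)

/-- Range Restricted Concentration Property with constant `ε`. -/
def RRCP (n : ℕ → ℕ) (W : ∀ i : ℕ, Matrix (Fin (n (i + 1))) (Fin (n i)) ℝ) (d m : ℕ)
    (A : Matrix (Fin m) (Fin (n d)) ℝ) (ε : ℝ) : Prop :=
  ∀ x y x₁ x₂ x₃ x₄ : Fin (n 0) → ℝ, x ≠ 0 → y ≠ 0 →
    |dotp
        ((((signedMat A (net n W d x))ᵀ * signedMat A (net n W d y)) -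
              Phi (net n W d x) (net n W d y)).mulVec
          (net n W d x₁ - net n W d x₂))
        (net n W d x₃ - net n W d x₄)| ≤
      7 * ε * nrm (net n W d x₁ - net n W d x₂) * nrm (net n W d x₃ - net n W d x₄)

/-- Law of an `a × b` matrix with i.i.d. `N(0, v)` entries. -/
def gaussMatrix (a b : ℕ) (v : ℝ≥0) : Measure (Fin a → Fin b → ℝ) :=
  Measure.pi fun _ : Fin a => Measure.pi fun _ : Fin b => gaussianReal 0 v

instance (a b : ℕ) (v : ℝ≥0) : IsProbabilityMeasure (gaussMatrix a b v) := by
  unfold gaussMatrix; infer_instance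

/-- Extend a `Fin d`-indexed family of weight matrices to an `ℕ`-indexed one. -/
def extW (d : ℕ) (n : ℕ → ℕ)
    (ω : ∀ i : Fin d, Fin (n (i.1 + 1)) → Fin (n i.1) → ℝ) (i : ℕ) :
    Matrix (Fin (n (i + 1))) (Fin (n i)) ℝ :=
  if h : i < d then Matrix.of (ω ⟨i, h⟩) else 0

/-- Joint law of the `d` Gaussian weight matrices (variances `1/n_i`) and the
Gaussian measurement matrix (variance `1/m`). -/
def netMeasure (d m : ℕ) (n : ℕ → ℕ) :
    Measure ((∀ i : Fin d, Fin (n (i.1 + 1)) → Fin (n i.1) → ℝ) × (Fin m → Fin (n d) → ℝ)) :=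
  (Measure.pi fun i : Fin d => gaussMatrix (n (i.1 + 1)) (n i.1) ((n (i.1 + 1) : ℝ≥0))⁻¹).prod
    (gaussMatrix m (n d) ((m : ℝ≥0))⁻¹)

/-- The geometric conclusion: outside two small balls around `x₀` and `−ρ_d·x₀`
there is a descent direction, and the origin is a local maximum direction-wise. -/
def DescentConcl (n : ℕ → ℕ) (W : ∀ i : ℕ, Matrix (Fin (n (i + 1))) (Fin (n i)) ℝ)
    (d m : ℕ) (A : Matrix (Fin m) (Fin (n d)) ℝ) (ε K₂ : ℝ) : Prop :=
  ∀ x₀ : Fin (n 0) → ℝ, x₀ ≠ 0 →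
    (∀ x : Fin (n 0) → ℝ, x ≠ 0 →
        ¬nrm (x - x₀) < K₂ * (d : ℝ) ^ 3 * ε ^ ((1 : ℝ) / 4) * nrm x₀ →
        ¬nrm (x + rho d • x₀) < K₂ * (d : ℝ) ^ 14 * ε ^ ((1 : ℝ) / 4) * nrm x₀ →
        ∃ v : Fin (n 0) → ℝ, ∃ L : ℝ,
          L < 0 ∧ HasDirDeriv (objf n W d m A x₀) x (-v) L) ∧
    ∀ x : Fin (n 0) → ℝ, x ≠ 0 →
      ∃ L : ℝ, L < 0 ∧ HasDirDeriv (objf n W d m A x₀) 0 x L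
lemma dotp_eq {n : ℕ} (u v : Fin n → ℝ) : dotp u v = u ⬝ᵥ v := rfl

lemma dotp_comm {n : ℕ} (u v : Fin n → ℝ) : dotp u v = dotp v u := by
  simp [dotp_eq, dotProduct_comm]

lemma dotp_self_nonneg {n : ℕ} (v : Fin n → ℝ) : 0 ≤ dotp v v :=
  Finset.sum_nonneg fun i _ => mul_self_nonneg _

lemma nrm_nonneg {n : ℕ} (v : Fin n → ℝ) : 0 ≤ nrm v := Real.sqrt_nonneg _

lemma sq_nrm {n : ℕ} (v : Fin n → ℝ) : nrm v ^ 2 = dotp v v :=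
  Real.sq_sqrt (dotp_self_nonneg v)

lemma dotp_self_eq_zero {n : ℕ} {v : Fin n → ℝ} (h : dotp v v = 0) : v = 0 := by
  funext i
  have := (Finset.sum_eq_zero_iff_of_nonneg (fun i _ => mul_self_nonneg (v i))).1 h i (Finset.mem_univ i)
  have : v i * v i = 0 := this
  simpa [mul_self_eq_zero] using this

lemma nrm_pos {n : ℕ} {v : Fin n → ℝ} (h : v ≠ 0) : 0 < nrm v := by
  rcases lt_or_eq_of_le (dotp_self_nonneg v) with h1 | h1
  · exact Real.sqrt_pos.2 h1
  · exact absurd (dotp_self_eq_zero h1.symm) h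

lemma dotp_pos {n : ℕ} {v : Fin n → ℝ} (h : v ≠ 0) : 0 < dotp v v := by
  have := nrm_pos h
  nlinarith [sq_nrm v]

/-- bridge to EuclideanSpace -/
lemma dotp_eq_inner {n : ℕ} (u v : Fin n → ℝ) :
    dotp u v = @inner ℝ _ _ ((WithLp.equiv 2 (Fin n → ℝ)).symm u) ((WithLp.equiv 2 (Fin n → ℝ)).symm v) := by
  rw [PiLp.inner_apply]
  unfold dotp
  apply Finset.sum_congr rfl
  intro i _
  simp [mul_comm]

lemma nrm_eq_norm {n : ℕ} (v : Fin n → ℝ) :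
    nrm v = ‖(WithLp.equiv 2 (Fin n → ℝ)).symm v‖ := by
  rw [EuclideanSpace.norm_eq, nrm]
  congr 1
  rw [dotp]
  apply Finset.sum_congr rfl
  intro i _
  rw [show ((WithLp.equiv 2 (Fin n → ℝ)).symm v) i = v i from rfl, Real.norm_eq_abs, sq_abs, sq]

lemma abs_dotp_le {n : ℕ} (u v : Fin n → ℝ) : |dotp u v| ≤ nrm u * nrm v := by
  rw [dotp_eq_inner, nrm_eq_norm, nrm_eq_norm]
  exact abs_real_inner_le_norm _ _

lemma abs_dotp_mulVec_le {a b : ℕ} (M : Matrix (Fin a) (Fin b) ℝ) (u : Fin a → ℝ) (v : Fin b → ℝ) :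
    |dotp u (M.mulVec v)| ≤ specNorm M * nrm u * nrm v := by
  rw [dotp_eq_inner, nrm_eq_norm, nrm_eq_norm]
  have h1 : (WithLp.equiv 2 (Fin a → ℝ)).symm (M.mulVec v)
      = (LinearMap.toContinuousLinearMap (Matrix.toEuclideanLin M)) ((WithLp.equiv 2 (Fin b → ℝ)).symm v) := by
    simp [Matrix.toEuclideanLin_apply_piLp_toLp]
  rw [h1]
  calc |@inner ℝ _ _ ((WithLp.equiv 2 (Fin a → ℝ)).symm u) _|
      ≤ ‖(WithLp.equiv 2 (Fin a → ℝ)).symm u‖ * ‖(LinearMap.toContinuousLinearMap (Matrix.toEuclideanLin M)) ((WithLp.equiv 2 (Fin b → ℝ)).symm v)‖ := abs_real_inner_le_norm _ _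
    _ ≤ ‖(WithLp.equiv 2 (Fin a → ℝ)).symm u‖ * (specNorm M * ‖(WithLp.equiv 2 (Fin b → ℝ)).symm v‖) := by
        gcongr
        exact ContinuousLinearMap.le_opNorm _ _
    _ = specNorm M * ‖(WithLp.equiv 2 (Fin a → ℝ)).symm u‖ * ‖(WithLp.equiv 2 (Fin b → ℝ)).symm v‖ := by ring

lemma dotp_mulVec_mulVec {a k : ℕ} (A B : Matrix (Fin a) (Fin k) ℝ) (x y : Fin k → ℝ) :
    dotp (A.mulVec x) (B.mulVec y) = dotp x ((Aᵀ * B).mulVec y) := by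
  rw [dotp_eq, dotp_eq, ← Matrix.mulVec_mulVec, Matrix.dotProduct_mulVec x,
    Matrix.vecMul_transpose]

lemma vecMulVec_mulVec {k : ℕ} (u w y : Fin k → ℝ) :
    (Matrix.vecMulVec u w).mulVec y = (w ⬝ᵥ y) • u := by
  funext i
  simp only [Matrix.mulVec, Matrix.vecMulVec_apply, dotProduct, Pi.smul_apply,
    smul_eq_mul, Finset.mul_sum]
  rw [Finset.sum_mul]
  apply Finset.sum_congr rfl
  intro j _
  ring

lemma dotp_vecMulVec {k : ℕ} (x y u w : Fin k → ℝ) :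
    dotp x ((Matrix.vecMulVec u w).mulVec y) = dotp x u * dotp w y := by
  rw [vecMulVec_mulVec, dotp_eq, dotProduct_smul, dotp_eq, dotp_eq]
  simp [smul_eq_mul]; ring

lemma dotp_smul_right {n : ℕ} (a : ℝ) (u v : Fin n → ℝ) : dotp u (a • v) = a * dotp u v := by
  rw [dotp_eq, dotProduct_smul, dotp_eq, smul_eq_mul]

lemma dotp_smul_left {n : ℕ} (a : ℝ) (u v : Fin n → ℝ) : dotp (a • u) v = a * dotp u v := by
  rw [dotp_eq, smul_dotProduct, dotp_eq, smul_eq_mul]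

lemma dotp_sub_right {n : ℕ} (u v w : Fin n → ℝ) : dotp u (v - w) = dotp u v - dotp u w := by
  rw [dotp_eq, dotProduct_sub, dotp_eq, dotp_eq]

lemma dotp_add_right {n : ℕ} (u v w : Fin n → ℝ) : dotp u (v + w) = dotp u v + dotp u w := by
  rw [dotp_eq, dotProduct_add, dotp_eq, dotp_eq]

lemma dotp_sub_left {n : ℕ} (u v w : Fin n → ℝ) : dotp (u - v) w = dotp u w - dotp v w := by
  rw [dotp_comm, dotp_sub_right, dotp_comm w u, dotp_comm w v]

lemma dotp_swapMat {k : ℕ} {x y : Fin k → ℝ} (hx : x ≠ 0) (hy : y ≠ 0) :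
    dotp x ((swapMat x y).mulVec y) = nrm x * nrm y := by
  have hnx := nrm_pos hx
  have hny := nrm_pos hy
  have hxx : dotp x x = nrm x ^ 2 := (sq_nrm x).symm
  have hyy : dotp y y = nrm y ^ 2 := (sq_nrm y).symm
  unfold swapMat
  simp only []
  set nx := nrm x with hnxd
  set ny := nrm y with hnyd
  set s : ℝ := dotp x y with hs
  set u : Fin k → ℝ := nx⁻¹ • x with hu
  set v : Fin k → ℝ := ny⁻¹ • y with hv
  set c : ℝ := dotp u v with hc
  set w : Fin k → ℝ := v - c • u with hw
  clear_value nx ny s u v c w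
  have hnx0 : nx ≠ 0 := ne_of_gt hnx
  have hny0 : ny ≠ 0 := ne_of_gt hny
  have hc' : c = nx⁻¹ * (ny⁻¹ * s) := by
    rw [hc, hu, hv, dotp_smul_left, dotp_smul_right, hs]
  have hxu : dotp x u = nx := by
    rw [hu, dotp_smul_right, hxx]; field_simp
  have hxv : dotp x v = ny⁻¹ * s := by rw [hv, dotp_smul_right, hs]
  have huy : dotp u y = nx⁻¹ * s := by rw [hu, dotp_smul_left, hs]
  have hvy : dotp v y = ny := by
    rw [hv, dotp_smul_left, dotp_comm, hyy]; field_simp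
  have huu : dotp u u = 1 := by
    rw [hu, dotp_smul_left, dotp_smul_right, hxx]; field_simp
  have hvu : dotp v u = c := by rw [dotp_comm, ← hc]
  have hxw : dotp x w = 0 := by
    rw [hw, dotp_sub_right, hxv, dotp_smul_right, hxu, hc']
    field_simp
    ring
  have hwy : dotp w y = ny - c * (nx⁻¹ * s) := by
    rw [hw, dotp_sub_left, dotp_smul_left, hvy, huy]
  have hwu : dotp w u = 0 := by
    rw [hw, dotp_sub_left, dotp_smul_left, hvu, huu, mul_one, sub_self]
  have hvv : dotp v v = 1 := by
    rw [hv, dotp_smul_left, dotp_smul_right, hyy]; field_simp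
  have hvw : dotp v w = 1 - c ^ 2 := by
    rw [hw, dotp_sub_right, hvv, dotp_smul_right, hvu]; ring
  have hww : dotp w w = 1 - c ^ 2 := by
    nth_rewrite 2 [hw]
    rw [dotp_sub_right, dotp_comm w v, hvw, dotp_smul_right, hwu, mul_zero, sub_zero]
  split_ifs with h0
  · -- degenerate: c^2 = 1
    have hc2 : c ^ 2 = 1 := by rw [hww] at h0; linarith
    rw [Matrix.smul_mulVec, dotp_smul_right, dotp_vecMulVec, hxu, huy]
    rw [hc'] at hc2 ⊢
    field_simp at hc2 ⊢
    nlinarith [hnx, hny, hc2]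
  · rw [Matrix.sub_mulVec, Matrix.add_mulVec, Matrix.add_mulVec,
      Matrix.smul_mulVec, Matrix.smul_mulVec,
      dotp_sub_right, dotp_add_right, dotp_add_right, dotp_smul_right, dotp_smul_right,
      dotp_vecMulVec, dotp_vecMulVec, dotp_vecMulVec, dotp_vecMulVec,
      hxw, hxu, huy, hwy]
    field_simp
    ring

lemma dotp_Qmat {k : ℕ} {x y : Fin k → ℝ} (hx : x ≠ 0) (hy : y ≠ 0) :
    dotp x ((Qmat x y).mulVec y)
      = ((π - angl x y) / (2 * π)) * dotp x y
        + (Real.sin (angl x y) / (2 * π)) * (nrm x * nrm y) := by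
  rw [Qmat, Matrix.add_mulVec, Matrix.smul_mulVec, Matrix.smul_mulVec,
    Matrix.one_mulVec, dotp_add_right, dotp_smul_right, dotp_smul_right,
    dotp_swapMat hx hy]

lemma mul_cos_le_sin {φ : ℝ} (h0 : 0 ≤ φ) (h1 : φ ≤ π / 2) : φ * Real.cos φ ≤ Real.sin φ := by
  rcases eq_or_lt_of_le h0 with h | h
  · simp [← h]
  rcases eq_or_lt_of_le h1 with h2 | h2
  · rw [h2]; simp [Real.cos_pi_div_two, Real.sin_pi_div_two]
  have hc : 0 < Real.cos φ := Real.cos_pos_of_mem_Ioo ⟨by linarith [Real.pi_pos], h2⟩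
  have ht := Real.lt_tan h h2
  rw [Real.tan_eq_sin_div_cos] at ht
  have := (lt_div_iff₀ hc).mp ht
  linarith

lemma qform_nonneg {θ : ℝ} (h0 : 0 ≤ θ) (h1 : θ ≤ π) : 0 ≤ (π - θ) * Real.cos θ + Real.sin θ := by
  rcases le_or_gt θ (π / 2) with h | h
  · have hc : 0 ≤ Real.cos θ := Real.cos_nonneg_of_mem_Icc ⟨by linarith [Real.pi_pos], h⟩
    have hs : 0 ≤ Real.sin θ := Real.sin_nonneg_of_nonneg_of_le_pi h0 h1
    have : 0 ≤ π - θ := by linarith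
    positivity
  · have := mul_cos_le_sin (φ := π - θ) (by linarith) (by linarith)
    rw [Real.cos_pi_sub, Real.sin_pi_sub] at this
    linarith

lemma qform_lower {c t : ℝ} (hc1 : -1 ≤ c) (hc2 : c ≤ 1) (ht : 0 ≤ t) (hct : -t ≤ c) :
    1 - t ^ 2 - π * t ≤ Real.sin (Real.arccos c) + (π - Real.arccos c) * c := by
  have hθ0 := Real.arccos_nonneg c
  have hθ1 := Real.arccos_le_pi c
  have hsin : Real.sin (Real.arccos c) = Real.sqrt (1 - c ^ 2) := Real.sin_arccos c
  rcases le_or_gt 0 c with h | h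
  · -- θ ≤ π/2, so π - θ ≥ π/2 ≥ 1, and sin θ + cos θ ≥ 1
    have hθ2 : Real.arccos c ≤ π / 2 := Real.arccos_le_pi_div_two.2 h
    have hs0 : 0 ≤ Real.sin (Real.arccos c) := by
      rw [hsin]; positivity
    have hsc : Real.sin (Real.arccos c) ^ 2 = 1 - c ^ 2 := by
      rw [hsin, Real.sq_sqrt]; nlinarith
    have hkey : 1 ≤ Real.sin (Real.arccos c) + c := by nlinarith
    have hpi : (1 : ℝ) ≤ π - Real.arccos c := by
      have := Real.pi_gt_three; linarith
    nlinarith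
  · -- c < 0
    have hsq : 1 - c ^ 2 ≤ Real.sin (Real.arccos c) := by
      rw [hsin]
      nth_rewrite 1 [show (1 : ℝ) - c ^ 2 = Real.sqrt ((1 - c^2)^2) from (Real.sqrt_sq (by nlinarith)).symm]
      apply Real.sqrt_le_sqrt
      have h4 : c ^ 2 ≤ 1 := by nlinarith
      nlinarith [mul_nonneg (sq_nonneg c) (sub_nonneg.2 h4)]
    have h1 : (π - Real.arccos c) * c ≥ π * c := by nlinarith
    have h2 : π * c ≥ -(π * t) := by nlinarith [Real.pi_pos]
    nlinarith

/-- Key estimate: the post-layer inner product vs. the `Q`-form. -/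
lemma step_est {a k : ℕ} {ε : ℝ} {W : Matrix (Fin a) (Fin k) ℝ} (hW : WDC W ε)
    {x y : Fin k → ℝ} (hx : x ≠ 0) (hy : y ≠ 0) :
    |dotp ((posPart W x).mulVec x) ((posPart W y).mulVec y)
        - (((π - angl x y) / (2 * π)) * dotp x y
            + (Real.sin (angl x y) / (2 * π)) * (nrm x * nrm y))|
      ≤ ε * (nrm x * nrm y) := by
  have h1 := dotp_mulVec_mulVec (posPart W x) (posPart W y) x y
  have h3 : dotp x (((posPart W x)ᵀ * posPart W y).mulVec y)
      = dotp x (((posPart W x)ᵀ * posPart W y - Qmat x y).mulVec y)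
        + dotp x ((Qmat x y).mulVec y) := by
    rw [Matrix.sub_mulVec, dotp_sub_right]; ring
  have h4 := abs_dotp_mulVec_le ((posPart W x)ᵀ * posPart W y - Qmat x y) x y
  have h5 := hW x y hx hy
  have h6 : specNorm ((posPart W x)ᵀ * posPart W y - Qmat x y) * nrm x * nrm y
      ≤ ε * (nrm x * nrm y) := by
    have hnx := nrm_pos hx; have hny := nrm_pos hy
    have hs : (0:ℝ) ≤ specNorm ((posPart W x)ᵀ * posPart W y - Qmat x y) := norm_nonneg _
    nlinarith [mul_pos hnx hny, h5]
  rw [h1, h3, dotp_Qmat hx hy]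
  have := le_trans h4 h6
  rw [abs_le] at this ⊢
  constructor <;> nlinarith [this.1, this.2]

/-- Self version: angle is zero. -/
lemma step_self {a k : ℕ} {ε : ℝ} {W : Matrix (Fin a) (Fin k) ℝ} (hW : WDC W ε)
    {x : Fin k → ℝ} (hx : x ≠ 0) :
    |dotp ((posPart W x).mulVec x) ((posPart W x).mulVec x) - (1 / 2) * dotp x x|
      ≤ ε * dotp x x := by
  have h := step_est hW hx hx
  have ha : angl x x = 0 := by
    rw [angl]
    have : dotp x x / (nrm x * nrm x) = 1 := by
      have h1 : nrm x * nrm x = dotp x x := by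
        have := sq_nrm x; nlinarith
      rw [h1]
      field_simp [ne_of_gt (dotp_pos hx)]
    rw [this, Real.arccos_one]
  rw [ha] at h
  simp only [Real.sin_zero, sub_zero, zero_div, zero_mul, add_zero] at h
  have hπ : π / (2 * π) = 1 / 2 := by
    have := Real.pi_ne_zero; field_simp
  rw [hπ] at h
  have h2 : nrm x * nrm x = dotp x x := by have := sq_nrm x; nlinarith
  rw [h2] at h
  exact h
lemma nrm_mul_nrm {n : ℕ} (u v : Fin n → ℝ) :
    (nrm u * nrm v) ^ 2 = dotp u u * dotp v v := by
  rw [mul_pow, sq_nrm, sq_nrm]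

set_option maxHeartbeats 1600000 in
/-- The one-layer workhorse. -/
lemma layerStep {a k : ℕ} {ε : ℝ} (hε0 : 0 < ε) (hε : ε ≤ 1 / 1000)
    {W : Matrix (Fin a) (Fin k) ℝ} (hW : WDC W ε)
    {x y : Fin k → ℝ} (hx : x ≠ 0) (hy : y ≠ 0) :
    (posPart W x).mulVec x ≠ 0 ∧ (posPart W y).mulVec y ≠ 0
    ∧ (1 / 2 - ε) * dotp x x ≤ dotp ((posPart W x).mulVec x) ((posPart W x).mulVec x)
    ∧ dotp ((posPart W x).mulVec x) ((posPart W x).mulVec x) ≤ (1 / 2 + ε) * dotp x x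
    ∧ (1 / 2 - ε) * dotp y y ≤ dotp ((posPart W y).mulVec y) ((posPart W y).mulVec y)
    ∧ dotp ((posPart W y).mulVec y) ((posPart W y).mulVec y) ≤ (1 / 2 + ε) * dotp y y
    ∧ -(4 * ε) * (nrm ((posPart W x).mulVec x) * nrm ((posPart W y).mulVec y))
        ≤ dotp ((posPart W x).mulVec x) ((posPart W y).mulVec y)
    ∧ (-(4 * ε) * (nrm x * nrm y) ≤ dotp x y →
        (1 / 4) * (nrm ((posPart W x).mulVec x) * nrm ((posPart W y).mulVec y))
          ≤ dotp ((posPart W x).mulVec x) ((posPart W y).mulVec y)) := by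
  set x' := (posPart W x).mulVec x with hx'd
  set y' := (posPart W y).mulVec y with hy'd
  have hπ := Real.pi_gt_three
  have hπ' := Real.pi_lt_d2
  have hnx := nrm_pos hx
  have hny := nrm_pos hy
  have hdx := dotp_pos hx
  have hdy := dotp_pos hy
  -- norm recursions
  have hXX := step_self hW (x := x) hx
  have hYY := step_self hW (x := y) hy
  rw [abs_le] at hXX hYY
  have hxlo : (1 / 2 - ε) * dotp x x ≤ dotp x' x' := by nlinarith [hXX.1]
  have hxhi : dotp x' x' ≤ (1 / 2 + ε) * dotp x x := by nlinarith [hXX.2]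
  have hylo : (1 / 2 - ε) * dotp y y ≤ dotp y' y' := by nlinarith [hYY.1]
  have hyhi : dotp y' y' ≤ (1 / 2 + ε) * dotp y y := by nlinarith [hYY.2]
  have hx'pos : 0 < dotp x' x' := by nlinarith
  have hy'pos : 0 < dotp y' y' := by nlinarith
  have hx'ne : x' ≠ 0 := by
    intro h; rw [h] at hx'pos; simp [dotp] at hx'pos
  have hy'ne : y' ≠ 0 := by
    intro h; rw [h] at hy'pos; simp [dotp] at hy'pos
  have hnx' := nrm_pos hx'ne
  have hny' := nrm_pos hy'ne
  have hstep := step_est hW hx hy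
  rw [abs_le] at hstep
  rw [← hx'd, ← hy'd] at hstep
  have hangl : angl x y = Real.arccos (dotp x y / (nrm x * nrm y)) := rfl
  set N := nrm x * nrm y with hNdef
  set N' := nrm x' * nrm y' with hN'def
  have hN : 0 < N := mul_pos hnx hny
  have hN' : 0 < N' := mul_pos hnx' hny'
  have hN'hi : N' ≤ (1 / 2 + ε) * N := by
    apply le_of_pow_le_pow_left₀ two_ne_zero (by positivity)
    rw [nrm_mul_nrm, mul_pow, nrm_mul_nrm]
    calc dotp x' x' * dotp y' y' ≤ ((1 / 2 + ε) * dotp x x) * ((1 / 2 + ε) * dotp y y) := by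
          apply mul_le_mul hxhi hyhi (le_of_lt hy'pos) (by positivity)
      _ = (1 / 2 + ε) ^ 2 * (dotp x x * dotp y y) := by ring
  have hN'lo : (1 / 2 - ε) * N ≤ N' := by
    apply le_of_pow_le_pow_left₀ two_ne_zero (by positivity)
    rw [mul_pow, nrm_mul_nrm, nrm_mul_nrm]
    calc (1 / 2 - ε) ^ 2 * (dotp x x * dotp y y)
        = ((1 / 2 - ε) * dotp x x) * ((1 / 2 - ε) * dotp y y) := by ring
      _ ≤ dotp x' x' * dotp y' y' := by
          apply mul_le_mul hxlo hylo (by nlinarith) (le_of_lt hx'pos)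
  -- angle and inner product
  set c : ℝ := dotp x y / N with hcdef
  have habs : |dotp x y| ≤ N := abs_dotp_le x y
  have hc1 : -1 ≤ c := by
    rw [hcdef, le_div_iff₀ hN]
    cases' abs_le.mp habs with h1 h2; linarith
  have hc2 : c ≤ 1 := by
    rw [hcdef, div_le_iff₀ hN]
    cases' abs_le.mp habs with h1 h2; linarith
  set θ := angl x y with hθdef
  have hcos : Real.cos θ = c := by rw [hangl]; exact Real.cos_arccos hc1 hc2
  have hθ0 : 0 ≤ θ := by rw [hangl]; exact Real.arccos_nonneg c
  have hθπ : θ ≤ π := by rw [hangl]; exact Real.arccos_le_pi c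
  have hxyN : dotp x y = c * N := by rw [hcdef]; field_simp
  set u : ℝ := (π - θ) * c + Real.sin θ with hudef
  clear_value x' y' N N' c θ u
  have hform : ((π - θ) / (2 * π)) * dotp x y + (Real.sin θ / (2 * π)) * N
      = u / (2 * π) * N := by
    rw [hxyN, hudef]
    have := Real.pi_ne_zero
    field_simp
  have hkey : u / (2 * π) * N - ε * N ≤ dotp x' y' := by
    have := hstep.1
    linarith [hform, this]
  have hu0 : 0 ≤ u := by
    rw [hudef, ← hcos]
    exact qform_nonneg hθ0 hθπ
  -- part A
  have partA : -(4 * ε) * N' ≤ dotp x' y' := by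
    have h1 : -(ε) * N ≤ dotp x' y' := by
      have : 0 ≤ u / (2 * π) * N := by positivity
      linarith
    have h2 : -(4 * ε) * N' ≤ -(4 * ε) * ((1 / 2 - ε) * N) := by
      apply mul_le_mul_of_nonpos_left hN'lo (by linarith)
    nlinarith
  -- part B
  have partB : -(4 * ε) * N ≤ dotp x y → (1 / 4) * N' ≤ dotp x' y' := by
    intro hs
    have hc4 : -(4 * ε) ≤ c := by
      rw [hcdef, le_div_iff₀ hN]; linarith
    have hulo : 1 - (4 * ε) ^ 2 - π * (4 * ε) ≤ u := by
      have := qform_lower hc1 hc2 (by linarith : (0:ℝ) ≤ 4 * ε) hc4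
      rw [hudef, hangl]
      linarith
    have hu2 : (0.987 : ℝ) ≤ u := by nlinarith
    have hdiv : (0.156 : ℝ) ≤ u / (2 * π) := by
      rw [le_div_iff₀ (by positivity)]
      nlinarith
    have h3 : (0.155 : ℝ) * N ≤ dotp x' y' := by
      have h4 : (0.156 : ℝ) * N ≤ u / (2 * π) * N := by
        apply mul_le_mul_of_nonneg_right hdiv (le_of_lt hN)
      nlinarith
    have h5 : (1 / 4 : ℝ) * N' ≤ (1 / 4) * ((1 / 2 + ε) * N) := by
      nlinarith
    nlinarith
  exact ⟨hx'ne, hy'ne, hxlo, hxhi, hylo, hyhi, partA, partB⟩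
set_option maxHeartbeats 1600000 in
/-- under the WDC, the outputs of the network at `x` and `y` have
a substantial inner product. -/
theorem statement5 (d : ℕ) (hd : 2 ≤ d) (ε : ℝ) (hε0 : 0 < ε)
    (hε1 : ε < ((d : ℝ) ^ 4)⁻¹ * (1 / (16 * π)) ^ 2)
    (n : ℕ → ℕ) (hn : ∀ i < d, n i < n (i + 1))
    (W : ∀ i : ℕ, Matrix (Fin (n (i + 1))) (Fin (n i)) ℝ)
    (hW : ∀ i < d, WDC (W i) ε) :
    ∀ x y : Fin (n 0) → ℝ, x ≠ 0 → y ≠ 0 →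
      (1 / (4 * π)) * (1 / 2 ^ d) * nrm x * nrm y ≤
        dotp ((layerProd n W d x).mulVec x) ((layerProd n W d y).mulVec y) := by
  intro x y hx hy
  have hπ := Real.pi_gt_three
  have hπ' := Real.pi_lt_d2
  have hd2 : (2 : ℝ) ≤ (d : ℝ) := by exact_mod_cast hd
  have hd0 : (0 : ℝ) < (d : ℝ) := by linarith
  -- numeric bounds on ε
  have hdε : (d : ℝ) * ε ≤ 1 / 18000 := by
    have h8d : 8 * (d : ℝ) ≤ (d : ℝ) ^ 4 := by
      have hcube : (8 : ℝ) ≤ (d : ℝ) ^ 3 := by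
        nlinarith [mul_nonneg (sub_nonneg.2 hd2) (show (0:ℝ) ≤ (d:ℝ)^2 + 2*(d:ℝ) + 4 by positivity)]
      nlinarith [mul_le_mul_of_nonneg_left hcube (le_of_lt hd0)]
    have hd4pos : (0 : ℝ) < (d : ℝ) ^ 4 := by positivity
    have hinv : ((d : ℝ) ^ 4)⁻¹ ≤ (8 * (d : ℝ))⁻¹ := by
      apply inv_anti₀ (by positivity) h8d
    have hsq : (1 / (16 * π)) ^ 2 ≤ 1 / 2304 := by
      rw [div_pow, one_pow]
      rw [div_le_div_iff₀ (by positivity) (by norm_num)]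
      nlinarith
    have h2 : ε ≤ (8 * (d : ℝ))⁻¹ * (1 / 2304) := by
      calc ε ≤ ((d : ℝ) ^ 4)⁻¹ * (1 / (16 * π)) ^ 2 := le_of_lt hε1
        _ ≤ (8 * (d : ℝ))⁻¹ * (1 / 2304) := by
            apply mul_le_mul hinv hsq (by positivity) (by positivity)
    have h3 : (d : ℝ) * ((8 * (d : ℝ))⁻¹ * (1 / 2304)) = 1 / 18432 := by
      field_simp; ring
    calc (d : ℝ) * ε ≤ (d : ℝ) * ((8 * (d : ℝ))⁻¹ * (1 / 2304)) :=
          mul_le_mul_of_nonneg_left h2 (le_of_lt hd0)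
      _ = 1 / 18432 := h3
      _ ≤ 1 / 18000 := by norm_num
  have hε1000 : ε ≤ 1 / 1000 := by nlinarith
  -- main induction
  have main : ∀ i : ℕ, i ≤ d →
      ((layerProd n W i x).mulVec x ≠ 0) ∧ ((layerProd n W i y).mulVec y ≠ 0)
      ∧ (1 / 2 - ε) ^ i * dotp x x ≤ dotp ((layerProd n W i x).mulVec x) ((layerProd n W i x).mulVec x)
      ∧ (1 / 2 - ε) ^ i * dotp y y ≤ dotp ((layerProd n W i y).mulVec y) ((layerProd n W i y).mulVec y)
      ∧ (1 ≤ i → -(4 * ε) * (nrm ((layerProd n W i x).mulVec x) * nrm ((layerProd n W i y).mulVec y))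
            ≤ dotp ((layerProd n W i x).mulVec x) ((layerProd n W i y).mulVec y))
      ∧ (2 ≤ i → (1 / 4) * (nrm ((layerProd n W i x).mulVec x) * nrm ((layerProd n W i y).mulVec y))
            ≤ dotp ((layerProd n W i x).mulVec x) ((layerProd n W i y).mulVec y)) := by
    intro i
    induction i with
    | zero =>
        intro _
        simp only [layerProd, Matrix.one_mulVec, pow_zero, one_mul]
        exact ⟨hx, hy, le_refl _, le_refl _, by omega, by omega⟩
    | succ i ih =>
        intro hle
        have hi : i < d := by omega
        obtain ⟨hXne, hYne, hXlo, hYlo, hA, hB⟩ := ih (by omega)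
        have ls := layerStep hε0 hε1000 (hW i hi) hXne hYne
        obtain ⟨hX'ne, hY'ne, hX'lo, hX'hi, hY'lo, hY'hi, lsA, lsB⟩ := ls
        have hrx : (layerProd n W (i + 1) x).mulVec x
            = (posPart (W i) ((layerProd n W i x).mulVec x)).mulVec ((layerProd n W i x).mulVec x) := by
          show (posPart (W i) ((layerProd n W i x).mulVec x) * layerProd n W i x).mulVec x = _
          rw [← Matrix.mulVec_mulVec]
        have hry : (layerProd n W (i + 1) y).mulVec y
            = (posPart (W i) ((layerProd n W i y).mulVec y)).mulVec ((layerProd n W i y).mulVec y) := by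
          show (posPart (W i) ((layerProd n W i y).mulVec y) * layerProd n W i y).mulVec y = _
          rw [← Matrix.mulVec_mulVec]
        rw [hrx, hry]
        have hhalf : (0 : ℝ) ≤ 1 / 2 - ε := by linarith
        refine ⟨hX'ne, hY'ne, ?_, ?_, ?_, ?_⟩
        · calc (1 / 2 - ε) ^ (i + 1) * dotp x x
              = (1 / 2 - ε) * ((1 / 2 - ε) ^ i * dotp x x) := by ring
            _ ≤ (1 / 2 - ε) * dotp ((layerProd n W i x).mulVec x) ((layerProd n W i x).mulVec x) := by
                apply mul_le_mul_of_nonneg_left hXlo hhalf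
            _ ≤ _ := hX'lo
        · calc (1 / 2 - ε) ^ (i + 1) * dotp y y
              = (1 / 2 - ε) * ((1 / 2 - ε) ^ i * dotp y y) := by ring
            _ ≤ (1 / 2 - ε) * dotp ((layerProd n W i y).mulVec y) ((layerProd n W i y).mulVec y) := by
                apply mul_le_mul_of_nonneg_left hYlo hhalf
            _ ≤ _ := hY'lo
        · intro _; exact lsA
        · intro h2i
          have h1i : 1 ≤ i := by omega
          exact lsB (hA h1i)
  -- conclude
  obtain ⟨hXne, hYne, hXlo, hYlo, _, hfin⟩ := main d (le_refl d)
  have hsd := hfin hd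
  -- product of norms lower bound
  have hNlo : (1 / 2 - ε) ^ d * (nrm x * nrm y)
      ≤ nrm ((layerProd n W d x).mulVec x) * nrm ((layerProd n W d y).mulVec y) := by
    have hhalf : (0 : ℝ) ≤ 1 / 2 - ε := by linarith
    apply le_of_pow_le_pow_left₀ two_ne_zero
      (mul_nonneg (nrm_nonneg _) (nrm_nonneg _))
    rw [mul_pow, nrm_mul_nrm, nrm_mul_nrm]
    calc ((1 / 2 - ε) ^ d) ^ 2 * (dotp x x * dotp y y)
        = ((1 / 2 - ε) ^ d * dotp x x) * ((1 / 2 - ε) ^ d * dotp y y) := by ring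
      _ ≤ _ := by
          apply mul_le_mul hXlo hYlo
            (mul_nonneg (pow_nonneg hhalf d) (dotp_self_nonneg y))
            (le_of_lt (dotp_pos hXne))
  -- Bernoulli
  have hber : (1 : ℝ) - (d : ℝ) * (2 * ε) ≤ (1 - 2 * ε) ^ d := by
    have := one_add_mul_le_pow (a := -(2 * ε)) (by linarith) d
    calc (1 : ℝ) - (d : ℝ) * (2 * ε) = 1 + (d : ℝ) * (-(2 * ε)) := by ring
      _ ≤ (1 + -(2 * ε)) ^ d := this
      _ = (1 - 2 * ε) ^ d := by ring_nf
  have hhalfpow : (1 / 2 - ε) ^ d = (1 / 2 : ℝ) ^ d * (1 - 2 * ε) ^ d := by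
    rw [← mul_pow]; ring_nf
  have hpos2 : (0 : ℝ) < (1 / 2 : ℝ) ^ d := by positivity
  have hN0 : (0 : ℝ) ≤ nrm x * nrm y := mul_nonneg (nrm_nonneg x) (nrm_nonneg y)
  -- final chain
  have hchain : (1 / (4 * π)) * (1 / 2 ^ d) * nrm x * nrm y
      ≤ (1 / 4) * ((1 / 2 - ε) ^ d * (nrm x * nrm y)) := by
    have h1 : (1 - 2 * ε) ^ d ≥ 1 - 1 / 9000 := by
      have : (d : ℝ) * (2 * ε) ≤ 1 / 9000 := by nlinarith
      linarith
    have h2 : (1 / 2 - ε) ^ d ≥ (1 / 2 : ℝ) ^ d * (1 - 1 / 9000) := by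
      rw [hhalfpow]
      nlinarith
    have h3 : (1 / (4 * π)) ≤ (1 / 4) * (1 - 1 / 9000) := by
      rw [div_le_iff₀ (by positivity)]
      nlinarith
    have h4 : (1 / 2 : ℝ) ^ d = 1 / 2 ^ d := by
      rw [div_pow, one_pow]
    have h5 : (1 / (4 * π)) * (1 / 2 ^ d) ≤ (1 / 4) * (1 / 2 - ε) ^ d := by
      calc (1 / (4 * π)) * (1 / 2 ^ d) = (1 / (4 * π)) * (1 / 2 : ℝ) ^ d := by rw [h4]
        _ ≤ ((1 / 4) * (1 - 1 / 9000)) * (1 / 2 : ℝ) ^ d :=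
            mul_le_mul_of_nonneg_right h3 (le_of_lt hpos2)
        _ = (1 / 4) * ((1 / 2 : ℝ) ^ d * (1 - 1 / 9000)) := by ring
        _ ≤ (1 / 4) * (1 / 2 - ε) ^ d := by linarith
    calc (1 / (4 * π)) * (1 / 2 ^ d) * nrm x * nrm y
        = ((1 / (4 * π)) * (1 / 2 ^ d)) * (nrm x * nrm y) := by ring
      _ ≤ ((1 / 4) * (1 / 2 - ε) ^ d) * (nrm x * nrm y) :=
          mul_le_mul_of_nonneg_right h5 hN0
      _ = (1 / 4) * ((1 / 2 - ε) ^ d * (nrm x * nrm y)) := by ring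
  calc (1 / (4 * π)) * (1 / 2 ^ d) * nrm x * nrm y
      ≤ (1 / 4) * ((1 / 2 - ε) ^ d * (nrm x * nrm y)) := hchain
    _ ≤ (1 / 4) * (nrm ((layerProd n W d x).mulVec x) * nrm ((layerProd n W d y).mulVec y)) := by
        apply mul_le_mul_of_nonneg_left hNlo (by norm_num)
    _ ≤ _ := hsd
end DPR
end
end

section
/- The sequence (ρ_d) converges to 1 as d → ∞. -/
open Real Filter Set MeasureTheory ProbabilityTheory Matrix
open scoped Classical BigOperators NNReal ENNReal

noncomputable section

namespace DPR

lemma arccos_anti {x y : ℝ} (h : x ≤ y) : Real.arccos y ≤ Real.arccos x := by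
  unfold Real.arccos
  linarith [Real.monotone_arcsin h]

lemma carg_mem {θ : ℝ} (h0 : 0 ≤ θ) (h1 : θ ≤ π) :
    -1 ≤ (Real.cos θ * (π - θ) + Real.sin θ) / π ∧
      (Real.cos θ * (π - θ) + Real.sin θ) / π ≤ 1 := by
  have hπ := Real.pi_pos
  have hs : Real.sin θ ≤ θ := Real.sin_le h0
  have hs0 : 0 ≤ Real.sin θ := Real.sin_nonneg_of_nonneg_of_le_pi h0 h1
  have hc1 : Real.cos θ ≤ 1 := Real.cos_le_one θ
  have hc2 : -1 ≤ Real.cos θ := Real.neg_one_le_cos θ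
  constructor
  · rw [le_div_iff₀ hπ]
    nlinarith
  · rw [div_le_one hπ]
    nlinarith

lemma theta_mem (d : ℕ) : thetaSeq π d ∈ Set.Icc (0 : ℝ) π := by
  cases d with
  | zero => exact ⟨Real.pi_pos.le, le_refl _⟩
  | succ n => exact ⟨Real.arccos_nonneg _, Real.arccos_le_pi _⟩

lemma cos_theta_succ (d : ℕ) :
    Real.cos (thetaSeq π (d + 1)) =
      (Real.cos (thetaSeq π d) * (π - thetaSeq π d) + Real.sin (thetaSeq π d)) / π := by
  have h := theta_mem d
  have hb := carg_mem h.1 h.2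
  exact Real.cos_arccos hb.1 hb.2

lemma sum_id (d : ℕ) :
    ∑ i ∈ Finset.range d, (Real.sin (thetaSeq π i) / π) *
        ∏ j ∈ Finset.Ico (i + 1) d, (π - thetaSeq π j) / π
      = Real.cos (thetaSeq π d) + ∏ i ∈ Finset.range d, (π - thetaSeq π i) / π := by
  have hπ := Real.pi_ne_zero
  induction d with
  | zero => simp [thetaSeq]
  | succ n ih =>
    rw [Finset.sum_range_succ]
    have heq : ∀ i ∈ Finset.range n,
        (Real.sin (thetaSeq π i) / π) * ∏ j ∈ Finset.Ico (i + 1) (n + 1), (π - thetaSeq π j) / π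
        = ((Real.sin (thetaSeq π i) / π) * ∏ j ∈ Finset.Ico (i + 1) n, (π - thetaSeq π j) / π)
            * ((π - thetaSeq π n) / π) := by
      intro i hi
      rw [Finset.prod_Ico_succ_top (Finset.mem_range.1 hi)]
      ring
    rw [Finset.sum_congr rfl heq, ← Finset.sum_mul, ih, Finset.prod_range_succ,
      Finset.Ico_self, Finset.prod_empty, cos_theta_succ]
    field_simp
    ring

lemma rho_eq (d : ℕ) (hd : 1 ≤ d) :
    rho d = -(2 * Real.sin (thetaSeq π d)) / π
      + ((π - 2 * thetaSeq π d) / π) * Real.cos (thetaSeq π d) := by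
  have hp : ∏ i ∈ Finset.range d, (π - thetaSeq π i) / π = 0 :=
    Finset.prod_eq_zero (Finset.mem_range.2 hd) (by simp [thetaSeq])
  unfold rho
  rw [sum_id, hp]
  ring

lemma sin_ge_mul_cos {θ : ℝ} (h0 : 0 ≤ θ) (h1 : θ ≤ π / 2) :
    θ * Real.cos θ ≤ Real.sin θ := by
  rcases eq_or_lt_of_le h0 with h | h
  · simp [← h]
  rcases eq_or_lt_of_le h1 with h2 | h2
  · rw [h2]; simp [Real.cos_pi_div_two]
  have hc : 0 < Real.cos θ := Real.cos_pos_of_mem_Ioo ⟨by linarith, h2⟩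
  have := Real.lt_tan h h2
  rw [Real.tan_eq_sin_div_cos, lt_div_iff₀ hc] at this
  linarith

lemma gfun_le {θ : ℝ} (h0 : 0 ≤ θ) (h1 : θ ≤ π / 2) : gfun θ ≤ θ := by
  have hπ := Real.pi_pos
  have hθπ : θ ≤ π := by linarith
  have hcs : Real.cos θ ≤ (Real.cos θ * (π - θ) + Real.sin θ) / π := by
    rw [le_div_iff₀ hπ]
    nlinarith [sin_ge_mul_cos h0 h1]
  calc gfun θ ≤ Real.arccos (Real.cos θ) := arccos_anti hcs
    _ = θ := Real.arccos_cos h0 hθπ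

lemma theta_one : thetaSeq π 1 = π / 2 := by
  show gfun (thetaSeq π 0) = π / 2
  show gfun π = π / 2
  unfold gfun
  rw [show (Real.cos π * (π - π) + Real.sin π) / π = 0 by simp]
  simp [Real.arccos]

lemma theta_le_pi_div_two (d : ℕ) : thetaSeq π (d + 1) ≤ π / 2 := by
  induction d with
  | zero => rw [theta_one]
  | succ n ih => exact le_trans (gfun_le (theta_mem (n + 1)).1 ih) ih

lemma theta_anti : Antitone (fun d => thetaSeq π (d + 1)) := by
  apply antitone_nat_of_succ_le
  intro n
  exact gfun_le (theta_mem (n + 1)).1 (theta_le_pi_div_two n)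

lemma gfun_continuous : Continuous gfun := by
  unfold gfun
  exact Real.continuous_arccos.comp (by continuity)

lemma theta_tendsto : Filter.Tendsto (fun d => thetaSeq π d) Filter.atTop (nhds 0) := by
  have hbdd : BddBelow (Set.range fun d => thetaSeq π (d + 1)) :=
    ⟨0, by rintro x ⟨d, rfl⟩; exact (theta_mem (d + 1)).1⟩
  set L : ℝ := ⨅ d, thetaSeq π (d + 1) with hL
  have htd : Filter.Tendsto (fun d => thetaSeq π (d + 1)) Filter.atTop (nhds L) :=
    tendsto_atTop_ciInf theta_anti hbdd
  have hL0 : 0 ≤ L := le_ciInf fun d => (theta_mem (d + 1)).1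
  have hL2 : L ≤ π / 2 := le_trans (ciInf_le hbdd 0) (theta_le_pi_div_two 0)
  -- fixed point: gfun L = L
  have h1 : Filter.Tendsto (fun d => thetaSeq π (d + 1 + 1)) Filter.atTop (nhds L) :=
    htd.comp (Filter.tendsto_add_atTop_nat 1)
  have h2 : Filter.Tendsto (fun d => gfun (thetaSeq π (d + 1))) Filter.atTop (nhds (gfun L)) :=
    (gfun_continuous.tendsto L).comp htd
  have hfix : gfun L = L := tendsto_nhds_unique h2 h1
  -- from the fixed point, L = 0
  have hLπ : L ≤ π := by linarith [Real.pi_pos]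
  have hb := carg_mem hL0 hLπ
  have hcos : (Real.cos L * (π - L) + Real.sin L) / π = Real.cos L := by
    conv_rhs => rw [← hfix]
    exact (Real.cos_arccos hb.1 hb.2).symm
  have hsin : Real.sin L = L * Real.cos L := by
    have hπ := Real.pi_ne_zero
    field_simp at hcos
    linarith
  have hLzero : L = 0 := by
    by_contra hne
    have hLpos : 0 < L := lt_of_le_of_ne hL0 (Ne.symm hne)
    rcases eq_or_lt_of_le hL2 with h | h
    · rw [h] at hsin
      simp [Real.sin_pi_div_two, Real.cos_pi_div_two] at hsin
    · have hc : 0 < Real.cos L := Real.cos_pos_of_mem_Ioo ⟨by linarith, h⟩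
      have := Real.lt_tan hLpos h
      rw [Real.tan_eq_sin_div_cos, lt_div_iff₀ hc] at this
      nlinarith
  rw [hLzero] at htd
  exact (Filter.tendsto_add_atTop_iff_nat 1).1 htd

/-- `ρ_d → 1` as `d → ∞`. -/
theorem statement9 : Filter.Tendsto rho Filter.atTop (nhds 1) := by
  have hπ := Real.pi_ne_zero
  have hF : Filter.Tendsto
      (fun d => -(2 * Real.sin (thetaSeq π d)) / π
        + ((π - 2 * thetaSeq π d) / π) * Real.cos (thetaSeq π d))
      Filter.atTop (nhds 1) := by
    have hcont : Continuous (fun t : ℝ =>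
        -(2 * Real.sin t) / π + ((π - 2 * t) / π) * Real.cos t) := by continuity
    have := (hcont.tendsto 0).comp theta_tendsto
    simpa [Function.comp_def, Real.sin_zero, Real.cos_zero, div_self hπ] using this
  apply hF.congr'
  filter_upwards [Filter.eventually_ge_atTop 1] with d hd
  exact (rho_eq d hd).symm
end DPR
end
end
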